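/- Let μ be a probability measure on ℂ with infinite support and finite moments of all orders, and let φ₀, …, φ_{n-1} be the orthonormal polynomials with deg φ_k = k. Then there is a constant c_n > 0 such that for all z₁,…,z_n ∈ ℂ: det[K_n(z_i, z_j)]_{i,j=1}^n = c_n · ∏_{1 ≤ i < j ≤ n} |z_i − z_j|², where K_n(z,w) = Σ_{k=0}^{n-1} φ_k(z) · conj(φ_k(w)). -/

import Mathlib

open MeasureTheory Polynomial

lemma det_eval_aux {n : ℕ} (p : Fin n → Polynomial ℂ)
    (hdeg : ∀ k : Fin n, (p k).natDegree = k) (v : Fin n → ℂ) :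
    (Matrix.of fun i j : Fin n => (p j).eval (v i)).det
      = (∏ k : Fin n, (p k).leadingCoeff) * (Matrix.vandermonde v).det := by
  rw [Matrix.eval_matrixOfPolynomials_eq_vandermonde_mul_matrixOfPolynomials v p
    (fun i => (hdeg i).le), Matrix.det_mul, mul_comm]
  congr 1
  rw [Matrix.det_of_upperTriangular]
  · exact Finset.prod_congr rfl fun k _ => by
      simp [Matrix.of_apply, ← hdeg k, Polynomial.coeff_natDegree]
  · intro i j hij
    exact Polynomial.coeff_eq_zero_of_natDegree_lt (by simpa [hdeg j] using hij)



/-- For orthonormal polynomials `φ_k` (with `deg φ_k = k`) of a probability measure `μ`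
on `ℂ` with infinite support and finite moments, there is `c_n > 0` such that
`det[K_n(z_i,z_j)] = c_n ∏_{i<j} |z_i − z_j|²`, where
`K_n(z,w) = Σ_{k<n} φ_k(z) conj(φ_k(w))`. -/
theorem stmt10 (μ : Measure ℂ) [IsProbabilityMeasure μ]
    (hsupp : ∀ s : Finset ℂ, μ (↑s : Set ℂ) ≠ 1)
    (hmom : ∀ m : ℕ, Integrable (fun z => ‖z‖ ^ m) μ)
    (φ : ℕ → Polynomial ℂ) (hdeg : ∀ k, (φ k).degree = (k : ℕ))
    (horth : ∀ j k, ∫ z, (φ j).eval z * (starRingEnd ℂ) ((φ k).eval z) ∂μ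
        = if j = k then 1 else 0)
    (n : ℕ) :
    ∃ c : ℝ, 0 < c ∧ ∀ z : Fin n → ℂ,
      (Matrix.of fun i j : Fin n => ∑ k ∈ Finset.range n,
          (φ k).eval (z i) * (starRingEnd ℂ) ((φ k).eval (z j))).det
        = (c : ℂ) * ∏ i : Fin n, ∏ j ∈ Finset.univ.filter (fun j => i < j),
            ((‖z i - z j‖ ^ 2 : ℝ) : ℂ) := by
  have hlc : ∀ k : ℕ, (φ k).leadingCoeff ≠ 0 := fun k => by
    intro h
    have := hdeg k
    rw [Polynomial.leadingCoeff_eq_zero] at h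
    simp [h] at this
  have hnd : ∀ k : ℕ, (φ k).natDegree = k := fun k =>
    Polynomial.natDegree_eq_of_degree_eq_some (hdeg k)
  refine ⟨Complex.normSq (∏ k : Fin n, (φ k).leadingCoeff), ?_, ?_⟩
  · rw [Complex.normSq_pos]
    exact Finset.prod_ne_zero_iff.mpr fun k _ => hlc k
  intro z
  set A : Matrix (Fin n) (Fin n) ℂ := Matrix.of fun i k => (φ k).eval (z i) with hA
  have hM : (Matrix.of fun i j : Fin n => ∑ k ∈ Finset.range n,
      (φ k).eval (z i) * (starRingEnd ℂ) ((φ k).eval (z j))) = A * A.conjTranspose := by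
    ext i j
    simp [Matrix.mul_apply, A, Matrix.conjTranspose_apply, Fin.sum_univ_eq_sum_range
      (fun k => (φ k).eval (z i) * (starRingEnd ℂ) ((φ k).eval (z j)))]
  have hdetA : A.det = (∏ k : Fin n, (φ k).leadingCoeff) * (Matrix.vandermonde z).det :=
    det_eval_aux (fun k : Fin n => φ k) (fun k => hnd k) z
  rw [hM, Matrix.det_mul, Matrix.det_conjTranspose]
  have hstar : A.det * star A.det = (Complex.normSq A.det : ℂ) := Complex.mul_conj A.det
  have hV : Complex.normSq (Matrix.vandermonde z).det
      = ∏ i : Fin n, ∏ j ∈ Finset.univ.filter (fun j => i < j), ‖z i - z j‖ ^ 2 := by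
    rw [Matrix.det_vandermonde, map_prod]
    refine Finset.prod_congr rfl fun i _ => ?_
    rw [map_prod]
    refine Finset.prod_congr (by ext j; simp) fun j _ => ?_
    rw [Complex.normSq_eq_norm_sq, norm_sub_rev]
  rw [hstar, hdetA, map_mul, hV]
  push_cast
  ring
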